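/- The σ-reduction is confluent. -/

import Mathlib

/-- Terms of the call-by-value λ-calculus, in de Bruijn notation. -/
inductive Term : Type
  | var : ℕ → Term
  | lam : Term → Term
  | app : Term → Term → Term

namespace Term

/-- Values are variables and abstractions. -/
def isValue : Term → Prop
  | var _ => True
  | lam _ => True
  | app _ _ => False

/-- Shift free de Bruijn indices ≥ d by one. -/
def lift (d : ℕ) : Term → Term
  | var n => if n < d then var n else var (n+1)
  | lam M => lam (lift (d+1) M)
  | app M N => app (lift d M) (lift d N)

/-- Capture-avoiding substitution of `V` for index `k`. -/
def subst : Term → ℕ → Term → Term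
  | var n, k, V => if n = k then V else if k < n then var (n-1) else var n
  | lam M, k, V => lam (subst M (k+1) (lift 0 V))
  | app M N, k, V => app (subst M k V) (subst N k V)

/-- Apply a term to a list of arguments: `appList M [M₁,…,Mₘ] = M M₁ … Mₘ`. -/
def appList : Term → List Term → Term
  | M, [] => M
  | M, N :: Ns => appList (app M N) Ns

/-- Root σ-reduction rules σ₁ and σ₃ (freshness handled by lifting). -/
inductive SigmaBase : Term → Term → Prop
  | sigma1 (M N L : Term) :
      SigmaBase (app (app (lam M) N) L) (app (lam (app M (lift 0 L))) N)
  | sigma3 (V L N : Term) : isValue V →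
      SigmaBase (app V (app (lam L) N)) (app (lam (app (lift 0 V) L)) N)

/-- Root rules of v-reduction: β_v, σ₁ and σ₃. -/
inductive VBase : Term → Term → Prop
  | beta (M V : Term) : isValue V → VBase (app (lam M) V) (subst M 0 V)
  | sigma1 (M N L : Term) :
      VBase (app (app (lam M) N) L) (app (lam (app M (lift 0 L))) N)
  | sigma3 (V L N : Term) : isValue V →
      VBase (app V (app (lam L) N)) (app (lam (app (lift 0 V) L)) N)

/-- Contextual closure of a root relation. -/
inductive Ctx (r : Term → Term → Prop) : Term → Term → Prop
  | base {M M'} : r M M' → Ctx r M M'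
  | lam {M M'} : Ctx r M M' → Ctx r (lam M) (lam M')
  | appL {M M'} (N : Term) : Ctx r M M' → Ctx r (app M N) (app M' N)
  | appR (M : Term) {N N'} : Ctx r N N' → Ctx r (app M N) (app M N')

/-- σ-reduction: contextual closure of σ₁ ∪ σ₃. -/
def SigmaRed : Term → Term → Prop := Ctx SigmaBase

/-- v-reduction: contextual closure of β_v ∪ σ₁ ∪ σ₃. -/
def Red : Term → Term → Prop := Ctx VBase

/-- Head β_v-reduction. -/
inductive HeadBeta : Term → Term → Prop
  | beta (M V : Term) (Ms : List Term) : isValue V →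
      HeadBeta (appList (app (lam M) V) Ms) (appList (subst M 0 V) Ms)
  | right (V : Term) {N N'} (Ms : List Term) : isValue V → HeadBeta N N' →
      HeadBeta (appList (app V N) Ms) (appList (app V N') Ms)

/-- Head σ-reduction. -/
inductive HeadSigma : Term → Term → Prop
  | sigma1 (M N L : Term) (Ms : List Term) :
      HeadSigma (appList (app (app (lam M) N) L) Ms)
                (appList (app (lam (app M (lift 0 L))) N) Ms)
  | sigma3 (V L N : Term) (Ms : List Term) : isValue V →
      HeadSigma (appList (app V (app (lam L) N)) Ms)
                (appList (app (lam (app (lift 0 V) L)) N) Ms)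
  | right (V : Term) {N N'} (Ms : List Term) : isValue V → HeadSigma N N' →
      HeadSigma (appList (app V N) Ms) (appList (app V N') Ms)

/-- Head v-reduction: head β_v ∪ head σ. -/
def HeadRed (M N : Term) : Prop := HeadBeta M N ∨ HeadSigma M N

/-- Internal v-reduction: v-steps that are not head v-steps. -/
def IntRed (M N : Term) : Prop := Red M N ∧ ¬ HeadRed M N

/-- Parallel reduction of the shuffling calculus λ_v^σ. -/
inductive Par : Term → Term → Prop
  | var (x : ℕ) {Ms Ms' : List Term} : List.Forall₂ Par Ms Ms' →
      Par (appList (var x) Ms) (appList (var x) Ms')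
  | lam {M M'} {Ms Ms' : List Term} : Par M M' → List.Forall₂ Par Ms Ms' →
      Par (appList (lam M) Ms) (appList (lam M') Ms')
  | beta {M M' V V'} {Ms Ms' : List Term} : isValue V → isValue V' →
      Par M M' → Par V V' → List.Forall₂ Par Ms Ms' →
      Par (appList (app (lam M) V) Ms) (appList (subst M' 0 V') Ms')
  | sigma1 {M M' N N' L L'} {Ms Ms' : List Term} :
      Par M M' → Par N N' → Par L L' → List.Forall₂ Par Ms Ms' →
      Par (appList (app (app (lam M) N) L) Ms)
          (appList (app (lam (app M' (lift 0 L'))) N') Ms')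
  | sigma3 {V V' L L' N N'} {Ms Ms' : List Term} : isValue V → isValue V' →
      Par V V' → Par L L' → Par N N' → List.Forall₂ Par Ms Ms' →
      Par (appList (app V (app (lam L) N)) Ms)
          (appList (app (lam (app (lift 0 V') L')) N') Ms')

/-- Internal parallel reduction. -/
inductive IPar : Term → Term → Prop
  | lam {N N'} : Par N N' → IPar (lam N) (lam N')
  | var (x : ℕ) : IPar (var x) (var x)
  | right {V V' N N'} {Ms Ms' : List Term} : isValue V → isValue V' →
      Par V V' → IPar N N' → List.Forall₂ Par Ms Ms' →
      IPar (appList (app V N) Ms) (appList (app V' N') Ms')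

/-- One-hole contexts. -/
inductive Ctx1 : Type
  | hole : Ctx1
  | lam : Ctx1 → Ctx1
  | appL : Ctx1 → Term → Ctx1
  | appR : Term → Ctx1 → Ctx1

/-- Capture-allowing hole filling. -/
def fill : Ctx1 → Term → Term
  | .hole, M => M
  | .lam C, M => lam (fill C M)
  | .appL C N, M => app (fill C M) N
  | .appR N C, M => app N (fill C M)

/-- `M` halts: head β_v-reduction from `M` reaches a value. -/
def Halts (M : Term) : Prop := ∃ V, isValue V ∧ Relation.ReflTransGen HeadBeta M V

end Term

namespace Term

open Relation

/-! ### Weight measure: σ-reduction is terminating -/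

def weight : Term → ℕ
  | var _ => 2
  | lam M => weight M + 1
  | app M N => weight M * weight N

lemma two_le_weight (M : Term) : 2 ≤ weight M := by
  induction M with
  | var n => simp [weight]
  | lam M ih => simp [weight]; omega
  | app M N ihM ihN => simp only [weight]; nlinarith

lemma weight_lift (M : Term) : ∀ d, weight (lift d M) = weight M := by
  induction M with
  | var n => intro d; simp only [lift]; split <;> rfl
  | lam M ih => intro d; simp [lift, weight, ih]
  | app M N ihM ihN => intro d; simp [lift, weight, ihM, ihN]

lemma sigmaBase_weight {a b : Term} (h : SigmaBase a b) : weight b < weight a := by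
  cases h with
  | sigma1 M N L =>
    have hM := two_le_weight M; have hN := two_le_weight N; have hL := two_le_weight L
    simp only [weight, weight_lift]
    nlinarith
  | sigma3 V L N hV =>
    have hM := two_le_weight V; have hN := two_le_weight N; have hL := two_le_weight L
    simp only [weight, weight_lift]
    nlinarith

lemma sigmaRed_weight {a b : Term} (h : SigmaRed a b) : weight b < weight a := by
  induction h with
  | base h => exact sigmaBase_weight h
  | lam _ ih => simpa [weight] using ih
  | appL N _ ih =>
    have := two_le_weight N
    simp only [weight]
    exact Nat.mul_lt_mul_of_lt_of_le ih le_rfl (by omega)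
  | appR M _ ih =>
    have := two_le_weight M
    simp only [weight]
    exact Nat.mul_lt_mul_of_le_of_lt le_rfl ih (by omega)

/-! ### Lift lemmas -/

lemma lift_lift (M : Term) : ∀ d e, e ≤ d → lift (d+1) (lift e M) = lift e (lift d M) := by
  induction M with
  | var n =>
    intro d e h
    by_cases h1 : n < e
    · have h2 : n < d := lt_of_lt_of_le h1 h
      simp [lift, h1, h2, Nat.lt_succ_of_lt h2]
    · by_cases h2 : n < d
      · simp [lift, h1, h2, Nat.succ_lt_succ h2]
      · simp [lift, h1, h2, show ¬ n + 1 < d + 1 by omega, show ¬ n + 1 < e by omega]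
  | lam M ih =>
    intro d e h
    simp only [lift]
    rw [ih (d+1) (e+1) (by omega)]
  | app M N ihM ihN =>
    intro d e h
    simp [lift, ihM d e h, ihN d e h]

lemma isValue_lift {V : Term} (d : ℕ) (h : isValue V) : isValue (lift d V) := by
  cases V with
  | var n => simp only [lift]; split <;> trivial
  | lam M => trivial
  | app M N => exact h.elim

lemma lift_sigmaBase {a b : Term} (h : SigmaBase a b) (d : ℕ) :
    SigmaBase (lift d a) (lift d b) := by
  cases h with
  | sigma1 M N L =>
    simp only [lift]
    rw [lift_lift L d 0 (by omega)]
    exact SigmaBase.sigma1 _ _ _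
  | sigma3 V L N hV =>
    simp only [lift]
    rw [lift_lift V d 0 (by omega)]
    exact SigmaBase.sigma3 _ _ _ (isValue_lift d hV)

lemma lift_ctx {a b : Term} (h : SigmaRed a b) : ∀ d, SigmaRed (lift d a) (lift d b) := by
  induction h with
  | base h => exact fun d => Ctx.base (lift_sigmaBase h d)
  | lam _ ih => intro d; simp only [lift]; exact Ctx.lam (ih (d+1))
  | appL N _ ih => intro d; simp only [lift]; exact Ctx.appL _ (ih d)
  | appR M _ ih => intro d; simp only [lift]; exact Ctx.appR _ (ih d)

/-! ### Congruence for ReflTransGen -/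

lemma rtg_lam {M M' : Term} (h : ReflTransGen SigmaRed M M') :
    ReflTransGen SigmaRed (lam M) (lam M') :=
  ReflTransGen.lift lam (fun _ _ h => Ctx.lam h) _ _ h

lemma rtg_appL (N : Term) {M M' : Term} (h : ReflTransGen SigmaRed M M') :
    ReflTransGen SigmaRed (app M N) (app M' N) :=
  ReflTransGen.lift (fun t => app t N) (fun _ _ h => Ctx.appL N h) _ _ h

lemma rtg_appR (M : Term) {N N' : Term} (h : ReflTransGen SigmaRed N N') :
    ReflTransGen SigmaRed (app M N) (app M N') :=
  ReflTransGen.lift (fun t => app M t) (fun _ _ h => Ctx.appR M h) _ _ h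

/-! ### Determinism of root steps -/

lemma sigmaBase_det {a b c : Term} (h1 : SigmaBase a b) (h2 : SigmaBase a c) : b = c := by
  cases h1 with
  | sigma1 M N L =>
    cases h2 with
    | sigma1 => rfl
    | sigma3 V L' N' hV => simp [isValue] at hV
  | sigma3 V L N hV =>
    cases h2 with
    | sigma1 => simp [isValue] at hV
    | sigma3 => rfl

end Term
namespace Term
open Relation

lemma key {a b c : Term} (h1 : SigmaBase a b) (h2 : SigmaRed a c) :
    ∃ d, ReflTransGen SigmaRed b d ∧ ReflTransGen SigmaRed c d := by
  cases h2 with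
  | base h2' =>
    exact ⟨b, ReflTransGen.refl, by rw [sigmaBase_det h2' h1]⟩
  | lam h2' => cases h1
  | appL N2 h2' =>
    -- a = app a₁ N2, step h2' inside a₁
    cases h1 with
    | sigma1 M N L =>
      -- a₁ = app (lam M) N, N2 = N2, b = app (lam (app M (lift 0 N2))) N
      cases h2' with
      | base hb =>
        cases hb with
        | sigma3 V A B hV =>
          -- V = lam M, N = app (lam A) B : critical pair 1
          refine ⟨app (lam (app (lam (app (lift 1 M) (lift 0 (lift 0 N2)))) A)) B, ?_, ?_⟩
          · -- b = app (lam (app M (lift 0 N2))) (app (lam A) B) : one σ₃ step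
            have : SigmaBase (app (lam (app M (lift 0 N2))) (app (lam A) B))
                (app (lam (app (lift 0 (lam (app M (lift 0 N2)))) A)) B) :=
              SigmaBase.sigma3 _ _ _ trivial
            refine ReflTransGen.single (Ctx.base ?_)
            simpa [lift, lift_lift N2 0 0 le_rfl] using this
          · -- c = app (app (lam (app (lift 0 (lam M)) A)) B) N2 : σ₁ then inner σ₁
            refine ReflTransGen.head (Ctx.base (SigmaBase.sigma1 _ _ _)) ?_
            refine ReflTransGen.single (Ctx.appL _ (Ctx.lam (Ctx.base ?_)))
            have : SigmaBase (app (app (lam (lift 1 M)) A) (lift 0 N2))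
                (app (lam (app (lift 1 M) (lift 0 (lift 0 N2)))) A) :=
              SigmaBase.sigma1 _ _ _
            simpa [lift] using this
      | appL _ h'' =>
        cases h'' with
        | lam hM =>
          rename_i M'
          exact ⟨app (lam (app M' (lift 0 N2))) N,
            ReflTransGen.single (Ctx.appL _ (Ctx.lam (Ctx.appL _ hM))),
            ReflTransGen.single (Ctx.base (SigmaBase.sigma1 _ _ _))⟩
        | base hb => cases hb
      | appR _ h'' =>
        rename_i N'
        exact ⟨app (lam (app M (lift 0 N2))) N',
          ReflTransGen.single (Ctx.appR _ h''),
          ReflTransGen.single (Ctx.base (SigmaBase.sigma1 _ _ _))⟩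
    | sigma3 V A B hV =>
      -- a₁ = V, N2 = app (lam A) B, h2' : Ctx V c₁
      cases h2' with
      | base hb => cases hb <;> simp [isValue] at hV
      | lam hM =>
        rename_i M M'
        refine ⟨app (lam (app (lift 0 (lam M')) A)) B, ?_, ?_⟩
        · exact ReflTransGen.single
            (Ctx.appL _ (Ctx.lam (Ctx.appL _ (lift_ctx (Ctx.lam hM) 0))))
        · exact ReflTransGen.single (Ctx.base (SigmaBase.sigma3 _ _ _ trivial))
      | appL _ _ => simp [isValue] at hV
      | appR _ _ => simp [isValue] at hV
  | appR M2 h2' =>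
    cases h1 with
    | sigma1 M N L =>
      -- M2 = app (lam M) N, step h2' : Ctx L c₂
      rename_i L'
      exact ⟨app (lam (app M (lift 0 L'))) N,
        ReflTransGen.single (Ctx.appL _ (Ctx.lam (Ctx.appR _ (lift_ctx h2' 0)))),
        ReflTransGen.single (Ctx.base (SigmaBase.sigma1 _ _ _))⟩
    | sigma3 V A B hV =>
      -- M2 = M2, h2' : Ctx (app (lam A) B) c₂
      cases h2' with
      | base hb =>
        cases hb with
        | sigma3 _ K C _ =>
          -- B = app (lam K) C : critical pair 2
          refine ⟨app (lam (app (lam (app (lift 0 (lift 0 M2)) (lift 1 A))) K)) C, ?_, ?_⟩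
          · -- b = app (lam (app (lift 0 M2) A)) (app (lam K) C) : one σ₃ step
            have : SigmaBase (app (lam (app (lift 0 M2) A)) (app (lam K) C))
                (app (lam (app (lift 0 (lam (app (lift 0 M2) A))) K)) C) :=
              SigmaBase.sigma3 _ _ _ trivial
            refine ReflTransGen.single (Ctx.base ?_)
            simpa [lift, lift_lift M2 0 0 le_rfl] using this
          · -- c = app M2 (app (lam (app (lift 0 (lam A)) K)) C)
            refine ReflTransGen.head
              (b := app (lam (app (lift 0 M2) (app (lift 0 (lam A)) K))) C) ?_ ?_
            · exact Ctx.base (SigmaBase.sigma3 M2 _ C hV)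
            refine ReflTransGen.single (Ctx.appL _ (Ctx.lam (Ctx.base ?_)))
            have : SigmaBase (app (lift 0 M2) (app (lam (lift 1 A)) K))
                (app (lam (app (lift 0 (lift 0 M2)) (lift 1 A))) K) :=
              SigmaBase.sigma3 _ _ _ (isValue_lift 0 hV)
            simpa [lift] using this
      | appL _ h'' =>
        cases h'' with
        | lam hA =>
          rename_i A'
          exact ⟨app (lam (app (lift 0 M2) A')) B,
            ReflTransGen.single (Ctx.appL _ (Ctx.lam (Ctx.appR _ hA))),
            ReflTransGen.single (Ctx.base (SigmaBase.sigma3 _ _ _ hV))⟩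
        | base hb => cases hb
      | appR _ h'' =>
        rename_i B'
        exact ⟨app (lam (app (lift 0 M2) A)) B',
          ReflTransGen.single (Ctx.appR _ h''),
          ReflTransGen.single (Ctx.base (SigmaBase.sigma3 _ _ _ hV))⟩

end Term
namespace Term
open Relation

lemma local_conf {a b c : Term} (h1 : SigmaRed a b) (h2 : SigmaRed a c) :
    ∃ d, ReflTransGen SigmaRed b d ∧ ReflTransGen SigmaRed c d := by
  induction h1 generalizing c with
  | base h1' => exact key h1' h2
  | lam h1' ih =>
    cases h2 with
    | base h2' => cases h2'
    | lam h2' =>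
      obtain ⟨d, hd1, hd2⟩ := ih h2'
      exact ⟨lam d, rtg_lam hd1, rtg_lam hd2⟩
  | appL N h1' ih =>
    cases h2 with
    | base h2' =>
      obtain ⟨d, hd2, hd1⟩ := key h2' (Ctx.appL N h1')
      exact ⟨d, hd1, hd2⟩
    | appL _ h2' =>
      obtain ⟨d, hd1, hd2⟩ := ih h2'
      exact ⟨app d N, rtg_appL N hd1, rtg_appL N hd2⟩
    | appR _ h2' =>
      exact ⟨app _ _, ReflTransGen.single (Ctx.appR _ h2'),
        ReflTransGen.single (Ctx.appL _ h1')⟩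
  | appR M h1' ih =>
    cases h2 with
    | base h2' =>
      obtain ⟨d, hd2, hd1⟩ := key h2' (Ctx.appR M h1')
      exact ⟨d, hd1, hd2⟩
    | appL _ h2' =>
      exact ⟨app _ _, ReflTransGen.single (Ctx.appL _ h2'),
        ReflTransGen.single (Ctx.appR _ h1')⟩
    | appR _ h2' =>
      obtain ⟨d, hd1, hd2⟩ := ih h2'
      exact ⟨app M d, rtg_appR M hd1, rtg_appR M hd2⟩

lemma newman : ∀ n a, weight a ≤ n → ∀ b c,
    ReflTransGen SigmaRed a b → ReflTransGen SigmaRed a c →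
    ∃ d, ReflTransGen SigmaRed b d ∧ ReflTransGen SigmaRed c d := by
  intro n
  induction n using Nat.strong_induction_on with
  | _ n IH =>
    intro a han b c hab hac
    rcases hab.cases_head with rfl | ⟨b₁, hab₁, hb₁b⟩
    · exact ⟨c, hac, ReflTransGen.refl⟩
    rcases hac.cases_head with rfl | ⟨c₁, hac₁, hc₁c⟩
    · exact ⟨b, ReflTransGen.refl, hab⟩
    obtain ⟨d₀, hbd₀, hcd₀⟩ := local_conf hab₁ hac₁
    obtain ⟨e, hbe, hd₀e⟩ := IH (weight b₁)
      (lt_of_lt_of_le (sigmaRed_weight hab₁) han) b₁ le_rfl b d₀ hb₁b hbd₀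
    obtain ⟨f, hcf, hef⟩ := IH (weight c₁)
      (lt_of_lt_of_le (sigmaRed_weight hac₁) han) c₁ le_rfl c e hc₁c (hcd₀.trans hd₀e)
    exact ⟨f, hbe.trans hef, hcf⟩

end Term

open Term Relation in
theorem sigma_confluent :
    ∀ M N L : Term, ReflTransGen SigmaRed M N → ReflTransGen SigmaRed M L →
      ∃ P, ReflTransGen SigmaRed N P ∧ ReflTransGen SigmaRed L P := fun M N L h1 h2 => Term.newman (Term.weight M) M le_rfl N L h1 h2
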